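/- arXiv:2601.20132 — 4 statements merged into one kernel-verified Lean document; each statement's English description precedes it below -/
import Mathlib

section
/- For every a > 0 and every h ∈ ℝ, the Fourier-type integral (1/(2a√π)) ∫_{ℝ} exp(i h x)(-i sign(x)) exp(-x²/(4a²)) dx equals exp(-a² h²) erfi(a h), where erfi(z) = (2/√π) ∫₀^z exp(t²) dt is the imaginary error function. -/
open MeasureTheory

/-- The imaginary error function `erfi(z) = (2/√π) ∫₀^z exp(t²) dt`. -/
noncomputable def erfi (z : ℝ) : ℝ :=
  (2 / Real.sqrt Real.pi) * ∫ t in (0:ℝ)..z, Real.exp (t ^ 2)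

namespace Stmt4Aux

open Real Set Filter

noncomputable def F (a h : ℝ) : ℝ :=
  ∫ x in Ioi (0:ℝ), Real.sin (h * x) * Real.exp (-x^2/(4*a^2))

lemma integrable_gauss {a : ℝ} (ha : 0 < a) :
    Integrable (fun x : ℝ => Real.exp (-x^2/(4*a^2))) := by
  have : ∀ x : ℝ, Real.exp (-x^2/(4*a^2)) = Real.exp (-(1/(4*a^2)) * x^2) := fun x => by ring_nf
  simp_rw [this]; exact integrable_exp_neg_mul_sq (by positivity)

lemma integrable_mul_gauss {a : ℝ} (ha : 0 < a) :
    Integrable (fun x : ℝ => x * Real.exp (-x^2/(4*a^2))) := by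
  have : ∀ x : ℝ, Real.exp (-x^2/(4*a^2)) = Real.exp (-(1/(4*a^2)) * x^2) := fun x => by ring_nf
  simp_rw [this]; exact integrable_mul_exp_neg_mul_sq (by positivity)

lemma hasDerivAt_F {a : ℝ} (ha : 0 < a) (h : ℝ) :
    HasDerivAt (F a) (∫ x in Ioi (0:ℝ), x * Real.cos (h*x) * Real.exp (-x^2/(4*a^2))) h := by
  have key := hasDerivAt_integral_of_dominated_loc_of_deriv_le (μ := volume.restrict (Ioi 0))
    (F := fun h x => Real.sin (h * x) * Real.exp (-x^2/(4*a^2)))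
    (F' := fun h x => x * Real.cos (h*x) * Real.exp (-x^2/(4*a^2)))
    (x₀ := h) (bound := fun x => |x| * Real.exp (-x^2/(4*a^2))) (Metric.ball_mem_nhds h one_pos)
    ?_ ?_ ?_ ?_ ?_ ?_
  · exact key.2
  · filter_upwards with h'
    exact (Continuous.aestronglyMeasurable (by continuity)).restrict
  · exact Integrable.mono ((integrable_gauss ha).restrict)
      (Continuous.aestronglyMeasurable (by continuity)).restrict
      (by filter_upwards with x
          simp only [norm_mul, Real.norm_eq_abs, Real.abs_exp]
          calc |Real.sin (h*x)| * Real.exp (-x^2/(4*a^2))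
              ≤ 1 * Real.exp (-x^2/(4*a^2)) :=
                mul_le_mul_of_nonneg_right (Real.abs_sin_le_one _) (Real.exp_nonneg _)
            _ = Real.exp (-x^2/(4*a^2)) := one_mul _)
  · exact (Continuous.aestronglyMeasurable (by continuity)).restrict
  · filter_upwards with x
    intro h' _
    simp only [norm_mul, Real.norm_eq_abs, Real.abs_exp]
    have : |x| * |Real.cos (h'*x)| * Real.exp (-x^2/(4*a^2))
        ≤ |x| * 1 * Real.exp (-x^2/(4*a^2)) := by
      apply mul_le_mul_of_nonneg_right _ (Real.exp_nonneg _)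
      exact mul_le_mul_of_nonneg_left (Real.abs_cos_le_one _) (abs_nonneg _)
    simpa [mul_one] using this
  · exact ((integrable_mul_gauss ha).abs.congr (by
      filter_upwards with x
      simp [abs_mul, Real.abs_exp])).restrict
  · filter_upwards with x
    intro h' _
    have h1 : HasDerivAt (fun h : ℝ => h * x) x h' := by
      simpa using hasDerivAt_mul_const (x := h') x
    have h2 : HasDerivAt (fun h : ℝ => Real.sin (h * x) * Real.exp (-x^2/(4*a^2))) _ h' :=
      (h1.sin).mul_const (Real.exp (-x^2/(4*a^2)))
    refine h2.congr_deriv ?_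
    ring

lemma hasDerivAt_gaussian {a : ℝ} (x : ℝ) :
    HasDerivAt (fun x : ℝ => Real.exp (-x^2/(4*a^2))) (-(x/(2*a^2)) * Real.exp (-x^2/(4*a^2))) x := by
  have h1 : HasDerivAt (fun x : ℝ => -x^2/(4*a^2)) (-(2*x)/(4*a^2)) x := by
    simpa using ((hasDerivAt_pow 2 x).neg.div_const (4*a^2))
  have := h1.exp
  convert this using 1
  ring

lemma tendsto_gauss {a : ℝ} (ha : 0 < a) :
    Tendsto (fun x : ℝ => Real.exp (-x^2/(4*a^2))) atTop (nhds 0) := by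
  apply Real.tendsto_exp_atBot.comp
  have : Tendsto (fun x : ℝ => x^2) atTop atTop := tendsto_pow_atTop two_ne_zero
  have h2 : Tendsto (fun x : ℝ => -x^2) atTop atBot := tendsto_neg_atBot_iff.mpr this
  simpa [div_eq_mul_inv] using h2.atBot_mul_const (by positivity : (0:ℝ) < (4*a^2)⁻¹)

lemma integrable_sin_gauss {a : ℝ} (ha : 0 < a) (s : ℝ) :
    Integrable (fun x : ℝ => Real.sin (s*x) * Real.exp (-x^2/(4*a^2))) := by
  refine (integrable_gauss ha).mono (Continuous.aestronglyMeasurable (by continuity)) ?_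
  filter_upwards with x
  simp only [norm_mul, Real.norm_eq_abs, Real.abs_exp]
  calc |Real.sin (s*x)| * Real.exp (-x^2/(4*a^2))
      ≤ 1 * Real.exp (-x^2/(4*a^2)) :=
        mul_le_mul_of_nonneg_right (Real.abs_sin_le_one _) (Real.exp_nonneg _)
    _ = Real.exp (-x^2/(4*a^2)) := one_mul _

lemma integrable_xcos_gauss {a : ℝ} (ha : 0 < a) (s : ℝ) :
    Integrable (fun x : ℝ => x * Real.cos (s*x) * Real.exp (-x^2/(4*a^2))) := by
  refine (integrable_mul_gauss ha).mono (Continuous.aestronglyMeasurable (by continuity)) ?_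
  filter_upwards with x
  simp only [norm_mul, Real.norm_eq_abs, Real.abs_exp]
  calc |x| * |Real.cos (s*x)| * Real.exp (-x^2/(4*a^2))
      ≤ |x| * 1 * Real.exp (-x^2/(4*a^2)) :=
        mul_le_mul_of_nonneg_right
          (mul_le_mul_of_nonneg_left (Real.abs_cos_le_one _) (abs_nonneg _)) (Real.exp_nonneg _)
    _ = |x| * Real.exp (-x^2/(4*a^2)) := by rw [mul_one]

lemma G_eq {a : ℝ} (ha : 0 < a) (s : ℝ) :
    ∫ x in Ioi (0:ℝ), x * Real.cos (s*x) * Real.exp (-x^2/(4*a^2))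
      = 2*a^2 - 2*a^2 * s * F a s := by
  set φ : ℝ → ℝ := fun x => -(2*a^2) * (Real.cos (s*x) * Real.exp (-x^2/(4*a^2))) with hφ
  set φ' : ℝ → ℝ := fun x => x * Real.cos (s*x) * Real.exp (-x^2/(4*a^2))
      + 2*a^2*s * (Real.sin (s*x) * Real.exp (-x^2/(4*a^2))) with hφ'
  have hderiv : ∀ x : ℝ, HasDerivAt φ (φ' x) x := by
    intro x
    have h1 : HasDerivAt (fun x : ℝ => s * x) s x := by
      simpa using (hasDerivAt_id x).const_mul s
    have h2 : HasDerivAt (fun x : ℝ => Real.cos (s*x)) (-Real.sin (s*x) * s) x := h1.cos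
    have h3 : HasDerivAt φ _ x := (h2.mul (hasDerivAt_gaussian (a := a) x)).const_mul (-(2*a^2))
    convert h3 using 1
    have hane : a^2 ≠ 0 := by positivity
    rw [hφ']
    field_simp
    ring
  have hint : IntegrableOn φ' (Ioi 0) := by
    apply Integrable.integrableOn
    exact (integrable_xcos_gauss ha s).add ((integrable_sin_gauss ha s).const_mul _)
  have htends : Tendsto φ atTop (nhds 0) := by
    have hb : Tendsto (fun x : ℝ => 2*a^2 * Real.exp (-x^2/(4*a^2))) atTop (nhds 0) := by
      simpa using (tendsto_gauss ha).const_mul (2*a^2)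
    refine squeeze_zero_norm (fun x => ?_) hb
    ·
      simp only [hφ, norm_mul, Real.norm_eq_abs, Real.abs_exp, abs_neg, abs_mul]
      rw [abs_of_nonneg (by norm_num : (0:ℝ) ≤ (2:ℝ)), abs_of_nonneg (by positivity : (0:ℝ) ≤ a^2)]
      apply mul_le_mul_of_nonneg_left _ (by positivity)
      calc |Real.cos (s*x)| * Real.exp (-x^2/(4*a^2))
          ≤ 1 * Real.exp (-x^2/(4*a^2)) :=
            mul_le_mul_of_nonneg_right (Real.abs_cos_le_one _) (Real.exp_nonneg _)
        _ = Real.exp (-x^2/(4*a^2)) := one_mul _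
  have hFTC := integral_Ioi_of_hasDerivAt_of_tendsto
    (f := φ) (f' := φ') (a := 0) (m := 0)
    (hderiv 0).continuousAt.continuousWithinAt (fun x _ => hderiv x) hint htends
  have hsplit : ∫ x in Ioi (0:ℝ), φ' x
      = (∫ x in Ioi (0:ℝ), x * Real.cos (s*x) * Real.exp (-x^2/(4*a^2)))
        + 2*a^2*s * F a s := by
    rw [hφ']
    rw [integral_add ((integrable_xcos_gauss ha s).restrict)
      (((integrable_sin_gauss ha s).const_mul _).restrict)]
    rw [integral_const_mul]
    rfl
  have hφ0 : φ 0 = -(2*a^2) := by simp [hφ]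
  rw [hsplit, hφ0] at hFTC
  linarith [hFTC]

lemma hasDerivAt_F' {a : ℝ} (ha : 0 < a) (h : ℝ) :
    HasDerivAt (F a) (2*a^2 - 2*a^2 * h * F a h) h := by
  have := hasDerivAt_F ha h
  rwa [G_eq ha h] at this

lemma F_eq {a : ℝ} (ha : 0 < a) (h : ℝ) :
    F a h = Real.exp (-(a^2) * h^2) * (2*a) * ∫ t in (0:ℝ)..(a*h), Real.exp (t^2) := by
  set u : ℝ → ℝ := fun h => Real.exp (a^2 * h^2) * F a h with hu
  have hu' : ∀ t : ℝ, HasDerivAt u (2*a^2 * Real.exp (a^2 * t^2)) t := by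
    intro t
    have h1 : HasDerivAt (fun t : ℝ => a^2 * t^2) (a^2 * (2*t)) t := by
      simpa using (hasDerivAt_pow 2 t).const_mul (a^2)
    have h2 : HasDerivAt (fun t : ℝ => Real.exp (a^2 * t^2))
        (Real.exp (a^2 * t^2) * (a^2 * (2*t))) t := h1.exp
    have h3 : HasDerivAt u _ t := h2.mul (hasDerivAt_F' ha t)
    convert h3 using 1
    ring
  have hFTC : ∫ t in (0:ℝ)..h, 2*a^2 * Real.exp (a^2 * t^2) = u h - u 0 := by
    apply intervalIntegral.integral_eq_sub_of_hasDerivAt (fun t _ => hu' t)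
    exact (Continuous.intervalIntegrable (by continuity) 0 h)
  have hF0 : F a 0 = 0 := by simp [F]
  have hu0 : u 0 = 0 := by simp [hu, hF0]
  have hsub : ∫ t in (0:ℝ)..h, 2*a^2 * Real.exp (a^2 * t^2)
      = 2*a * ∫ t in (0:ℝ)..(a*h), Real.exp (t^2) := by
    rw [intervalIntegral.integral_const_mul]
    have : ∀ t : ℝ, Real.exp (a^2 * t^2) = (fun s => Real.exp (s^2)) (a * t) := by
      intro t; simp only; ring_nf
    simp_rw [this]
    rw [intervalIntegral.integral_comp_mul_left (fun s => Real.exp (s^2)) (ne_of_gt ha)]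
    simp only [mul_zero, smul_eq_mul]
    field_simp
  have : u h = 2*a * ∫ t in (0:ℝ)..(a*h), Real.exp (t^2) := by
    rw [← hsub, hFTC, hu0, sub_zero]
  have hexp : Real.exp (-(a^2) * h^2) * Real.exp (a^2 * h^2) = 1 := by
    rw [← Real.exp_add]; ring_nf; exact Real.exp_zero
  calc F a h = (Real.exp (-(a^2) * h^2) * Real.exp (a^2 * h^2)) * F a h := by
        rw [hexp, one_mul]
    _ = Real.exp (-(a^2) * h^2) * u h := by rw [hu]; ring
    _ = _ := by rw [this]; ring

lemma measurable_realSign : Measurable Real.sign := by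
  unfold Real.sign
  exact Measurable.ite (measurableSet_lt measurable_id measurable_const) measurable_const
    (Measurable.ite (measurableSet_lt measurable_const measurable_id) measurable_const
      measurable_const)

lemma cexp_gauss_eq {a : ℝ} (x : ℝ) :
    Complex.exp (-(x:ℂ)^2/(4*(a:ℂ)^2)) = ((Real.exp (-x^2/(4*a^2)) : ℝ) : ℂ) := by
  rw [show (-(x:ℂ)^2/(4*(a:ℂ)^2)) = ((-x^2/(4*a^2) : ℝ) : ℂ) by push_cast; ring,
    Complex.ofReal_exp]

lemma exp_I_sub {θ : ℝ} :
    Complex.exp (Complex.I * θ) - Complex.exp (-(Complex.I * θ))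
      = 2 * Complex.I * Real.sin θ := by
  rw [show Complex.I * (θ:ℂ) = (θ:ℂ) * Complex.I by ring,
    show -((θ:ℂ) * Complex.I) = (-θ:ℂ) * Complex.I by push_cast; ring,
    Complex.exp_mul_I, Complex.exp_mul_I, Complex.cos_neg, Complex.sin_neg,
    ← Complex.ofReal_sin]
  ring

lemma f_meas {a : ℝ} (h : ℝ) : AEStronglyMeasurable (fun x : ℝ =>
    Complex.exp (Complex.I * h * x) * (-Complex.I * (Real.sign x : ℂ)) *
      Complex.exp (-(x:ℂ)^2/(4*(a:ℂ)^2))) volume := by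
  apply Measurable.aestronglyMeasurable
  apply Measurable.mul
  apply Measurable.mul
  · exact (Complex.measurable_exp.comp (by fun_prop))
  · exact (Complex.measurable_ofReal.comp measurable_realSign).const_mul _
  · exact (Complex.measurable_exp.comp (by fun_prop))

lemma f_integrable {a : ℝ} (ha : 0 < a) (h : ℝ) : Integrable (fun x : ℝ =>
    Complex.exp (Complex.I * h * x) * (-Complex.I * (Real.sign x : ℂ)) *
      Complex.exp (-(x:ℂ)^2/(4*(a:ℂ)^2))) volume := by
  refine (integrable_gauss ha).mono (f_meas h) ?_
  filter_upwards with x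
  rw [cexp_gauss_eq, norm_mul, norm_mul]
  have h1 : ‖Complex.exp (Complex.I * h * x)‖ = 1 := by
    rw [Complex.norm_exp]
    norm_num [Complex.mul_re]
  have h2 : ‖(-Complex.I * (Real.sign x : ℂ))‖ ≤ 1 := by
    simp only [norm_mul, norm_neg, Complex.norm_I, one_mul, Complex.norm_real]
    rcases Real.sign_apply_eq x with h' | h' | h' <;> rw [h'] <;> norm_num
  have h3 : ‖((Real.exp (-x^2/(4*a^2)) : ℝ) : ℂ)‖ = Real.exp (-x^2/(4*a^2)) := by
    rw [Complex.norm_real, Real.norm_eq_abs, Real.abs_exp]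
  rw [h1, h3, one_mul, Real.norm_eq_abs, Real.abs_exp]
  exact mul_le_of_le_one_left (Real.exp_nonneg _) h2

lemma f_neg_add {a : ℝ} (h x : ℝ) :
    Complex.exp (Complex.I * h * x) * (-Complex.I * (Real.sign x : ℂ)) *
      Complex.exp (-(x:ℂ)^2/(4*(a:ℂ)^2))
    + Complex.exp (Complex.I * h * (-x:ℝ)) * (-Complex.I * (Real.sign (-x) : ℂ)) *
      Complex.exp (-((-x:ℝ):ℂ)^2/(4*(a:ℂ)^2))
    = ((2 * (Real.sign x * Real.sin (h*x) * Real.exp (-x^2/(4*a^2))) : ℝ) : ℂ) := by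
  have hsgn : (Real.sign (-x) : ℂ) = -(Real.sign x : ℂ) := by
    rw [Real.sign_neg]; push_cast; ring
  have hsq : -(((-x:ℝ):ℂ))^2/(4*(a:ℂ)^2) = -(x:ℂ)^2/(4*(a:ℂ)^2) := by push_cast; ring
  rw [hsgn, hsq, cexp_gauss_eq]
  have harg : Complex.I * (h:ℂ) * ((-x:ℝ):ℂ) = -(Complex.I * ((h*x : ℝ):ℂ)) := by
    push_cast; ring
  have harg2 : Complex.I * (h:ℂ) * (x:ℂ) = Complex.I * ((h*x:ℝ):ℂ) := by push_cast; ring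
  rw [harg, harg2]
  have := exp_I_sub (θ := h*x)
  push_cast at this ⊢
  linear_combination (-Complex.I * (Real.sign x : ℂ) *
    Complex.exp (-(x:ℂ)^2/(4*(a:ℂ)^2))) * this
    + (-2 * (Real.sign x : ℂ) * Complex.exp (-(x:ℂ)^2/(4*(a:ℂ)^2)) *
      Complex.sin ((h:ℂ) * (x:ℂ))) * Complex.I_sq

lemma real_int_eq {a : ℝ} (ha : 0 < a) (h : ℝ) :
    ∫ x : ℝ, Real.sign x * Real.sin (h*x) * Real.exp (-x^2/(4*a^2)) = 2 * F a h := by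
  have hpt : ∀ x : ℝ, Real.sign x * Real.sin (h*x) * Real.exp (-x^2/(4*a^2))
      = (fun y => Real.sin (h*y) * Real.exp (-y^2/(4*a^2))) |x| := by
    intro x
    simp only
    rw [sq_abs]
    rcases lt_trichotomy x 0 with hx | hx | hx
    · rw [abs_of_neg hx, Real.sign_of_neg hx, mul_neg, Real.sin_neg]; ring
    · simp [hx]
    · rw [abs_of_pos hx, Real.sign_of_pos hx]; ring
  simp_rw [hpt]
  rw [integral_comp_abs (f := fun y => Real.sin (h*y) * Real.exp (-y^2/(4*a^2)))]
  rfl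

lemma integral_f_eq {a : ℝ} (ha : 0 < a) (h : ℝ) :
    ∫ x : ℝ, Complex.exp (Complex.I * h * x) * (-Complex.I * (Real.sign x : ℂ)) *
      Complex.exp (-(x:ℂ)^2/(4*(a:ℂ)^2)) = ((2 * F a h : ℝ) : ℂ) := by
  set f : ℝ → ℂ := fun x => Complex.exp (Complex.I * h * x) * (-Complex.I * (Real.sign x : ℂ)) *
      Complex.exp (-(x:ℂ)^2/(4*(a:ℂ)^2)) with hf
  have hint : Integrable f := f_integrable ha h
  have hnegint : Integrable (fun x => f (-x)) := hint.comp_neg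
  have hne : ∫ x, f (-x) = ∫ x, f x := by
    have A : MeasurableEmbedding (fun x : ℝ => -x) :=
      (Homeomorph.neg ℝ).measurableEmbedding
    conv_rhs => rw [← Measure.map_neg_eq_self (volume : Measure ℝ)]
    exact (A.integral_map f).symm
  have key : (2:ℂ) * ∫ x, f x = ∫ x, (f x + f (-x)) := by
    rw [integral_add hint hnegint, hne]; ring
  have key2 : ∫ x, (f x + f (-x))
      = ((∫ x : ℝ, 2 * (Real.sign x * Real.sin (h*x) * Real.exp (-x^2/(4*a^2))) : ℝ) : ℂ) :=
    calc ∫ x, (f x + f (-x))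
        = ∫ x : ℝ, ((2 * (Real.sign x * Real.sin (h*x) * Real.exp (-x^2/(4*a^2))) : ℝ) : ℂ) := by
          apply integral_congr_ae
          filter_upwards with x
          have := f_neg_add (a := a) h x
          simp only [hf]
          rw [show ((-x : ℝ) : ℂ) = (-(x:ℂ)) by push_cast; ring] at this
          rw [show ((-x : ℝ) : ℂ) = (-(x:ℂ)) by push_cast; ring]
          exact this
      _ = _ := integral_ofReal
  have key3 : (∫ x : ℝ, 2 * (Real.sign x * Real.sin (h*x) * Real.exp (-x^2/(4*a^2))))
      = 2 * (2 * F a h) := by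
    rw [MeasureTheory.integral_const_mul, real_int_eq ha h]
  apply mul_left_cancel₀ (two_ne_zero (α := ℂ))
  rw [key, key2, key3]
  push_cast
  ring

end Stmt4Aux

/-- `(1/(2a√π)) ∫_ℝ e^{ihx}(−i sign x) e^{−x²/(4a²)} dx = e^{−a²h²} erfi(ah)`. -/
theorem stmt4 (a : ℝ) (ha : 0 < a) (h : ℝ) :
    (1 / (2 * (a : ℂ) * (Real.sqrt Real.pi : ℂ))) *
      ∫ x : ℝ, Complex.exp (Complex.I * (h : ℂ) * (x : ℂ)) *
        (-Complex.I * (Real.sign x : ℂ)) *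
        Complex.exp (-(x : ℂ) ^ 2 / (4 * (a : ℂ) ^ 2)) =
    ((Real.exp (-(a ^ 2) * h ^ 2) * erfi (a * h) : ℝ) : ℂ) := by
  rw [Stmt4Aux.integral_f_eq ha h]
  rw [show (1 / (2 * (a : ℂ) * (Real.sqrt Real.pi : ℂ)))
      = ((1 / (2 * a * Real.sqrt Real.pi) : ℝ) : ℂ) by push_cast; ring]
  rw [← Complex.ofReal_mul, Complex.ofReal_inj]
  have hπ : (0:ℝ) < Real.sqrt Real.pi := Real.sqrt_pos.mpr Real.pi_pos
  rw [Stmt4Aux.F_eq ha h, erfi]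
  field_simp
end

section
/- Let x̃ ∈ ℝ^d be a unit vector and a > 0. Then for every h ∈ ℝ^d, ∫_{ℝ^d} exp(i⟨h,x⟩)(-i sign(⟨x,x̃⟩)) (2a√π)^{-d} exp(-‖x‖²/(4a²)) dx = exp(-a²‖h‖²) erfi(a⟨h,x̃⟩). -/
open MeasureTheory

open Real Set Filter Complex

noncomputable def Gd (y : ℝ) : ℝ := ∫ s in Ioi (0:ℝ), Real.sin (2*y*s) * Real.exp (-s^2)

lemma intOn_exp : IntegrableOn (fun s : ℝ => Real.exp (-s^2)) (Ioi 0) := by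
  have := (integrable_exp_neg_mul_sq (one_pos)).integrableOn (s := Ioi (0:ℝ))
  simpa using this

lemma intOn_mul_exp : IntegrableOn (fun s : ℝ => s * Real.exp (-s^2)) (Ioi 0) := by
  have := (integrable_mul_exp_neg_mul_sq (one_pos)).integrableOn (s := Ioi (0:ℝ))
  simpa using this

lemma intOn_sin (c : ℝ) : IntegrableOn (fun s : ℝ => Real.sin (c*s) * Real.exp (-s^2)) (Ioi 0) := by
  refine intOn_exp.mono' ?_ ?_
  · exact (Real.continuous_sin.comp (continuous_const.mul continuous_id)).mul
      (Real.continuous_exp.comp (continuous_pow 2).neg) |>.aestronglyMeasurable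
  · filter_upwards with s
    rw [norm_mul, Real.norm_eq_abs, Real.norm_eq_abs, Real.abs_exp]
    nlinarith [abs_sin_le_one (c*s), Real.exp_pos (-s^2), abs_nonneg (Real.sin (c*s))]

lemma intOn_cos (c : ℝ) :
    IntegrableOn (fun s : ℝ => 2*s*Real.cos (c*s) * Real.exp (-s^2)) (Ioi 0) := by
  refine (intOn_mul_exp.const_mul 2).mono' ?_ ?_
  · exact ((continuous_const.mul continuous_id).mul
      (Real.continuous_cos.comp (continuous_const.mul continuous_id))).mul
      (Real.continuous_exp.comp (continuous_pow 2).neg) |>.aestronglyMeasurable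
  · filter_upwards [ae_restrict_mem measurableSet_Ioi] with s hs
    have hs0 : (0:ℝ) < s := hs
    rw [Real.norm_eq_abs, abs_mul, abs_mul, abs_mul, Real.abs_exp]
    have h1 : |Real.cos (c*s)| ≤ 1 := abs_cos_le_one _
    have := Real.exp_pos (-s^2)
    rw [_root_.abs_two, abs_of_pos hs0]
    nlinarith [abs_nonneg (Real.cos (c*s)), mul_pos hs0 this]

lemma Gd_hasDeriv (y : ℝ) :
    HasDerivAt Gd (∫ s in Ioi (0:ℝ), 2*s*Real.cos (2*y*s) * Real.exp (-s^2)) y := by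
  have key := hasDerivAt_integral_of_dominated_loc_of_deriv_le (s := Metric.ball y 1) (μ := volume.restrict (Ioi 0))
    (F := fun y s => Real.sin (2*y*s) * Real.exp (-s^2))
    (F' := fun y s => 2*s*Real.cos (2*y*s) * Real.exp (-s^2))
    (x₀ := y) (bound := fun s => 2*(s * Real.exp (-s^2)))
    (Metric.ball_mem_nhds y one_pos) ?_ ((intOn_sin (2*y))) ?_ ?_ ?_ ?_
  · exact key.2
  · filter_upwards with x
    exact ((Real.continuous_sin.comp (continuous_const.mul continuous_id)).mul
      (Real.continuous_exp.comp (continuous_pow 2).neg)).aestronglyMeasurable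
  · exact (intOn_cos (2*y)).aestronglyMeasurable
  · filter_upwards [ae_restrict_mem measurableSet_Ioi] with s hs x _
    have hs0 : (0:ℝ) < s := hs
    rw [Real.norm_eq_abs, abs_mul, abs_mul, abs_mul, Real.abs_exp, _root_.abs_two, abs_of_pos hs0]
    have h1 : |Real.cos (2*x*s)| ≤ 1 := abs_cos_le_one _
    have := Real.exp_pos (-s^2)
    nlinarith [abs_nonneg (Real.cos (2*x*s)), mul_pos hs0 this]
  · exact intOn_mul_exp.const_mul 2
  · filter_upwards with s x _
    have h1 : HasDerivAt (fun x : ℝ => 2*x*s) (2*s) x := by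
      simpa using ((hasDerivAt_id x).const_mul 2).mul_const s
    have h2 := (h1.sin).mul_const (Real.exp (-s^2))
    exact h2.congr_deriv (by ring)

lemma parts (y : ℝ) :
    ∫ s in Ioi (0:ℝ), 2*s*Real.cos (2*y*s) * Real.exp (-s^2) = 1 - 2*y*Gd y := by
  have hderiv : ∀ s ∈ Ici (0:ℝ), HasDerivAt (fun s => -(Real.cos (2*y*s) * Real.exp (-s^2)))
      (2*y*(Real.sin (2*y*s) * Real.exp (-s^2)) + 2*s*Real.cos (2*y*s) * Real.exp (-s^2)) s := by
    intro s _
    have h1 : HasDerivAt (fun s : ℝ => 2*y*s) (2*y) s := by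
      simpa using (hasDerivAt_id s).const_mul (2*y)
    have h2 : HasDerivAt (fun s : ℝ => -s^2) (-(2*s)) s := by
      simpa using (hasDerivAt_pow 2 s).fun_neg
    have h3 := ((h1.cos).fun_mul (h2.exp)).fun_neg
    exact h3.congr_deriv (by ring)
  have hint : IntegrableOn (fun s => 2*y*(Real.sin (2*y*s) * Real.exp (-s^2))
      + 2*s*Real.cos (2*y*s) * Real.exp (-s^2)) (Ioi 0) :=
    ((intOn_sin (2*y)).const_mul (2*y)).add (intOn_cos (2*y))
  have htend : Tendsto (fun s => -(Real.cos (2*y*s) * Real.exp (-s^2))) atTop (nhds 0) := by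
    have hb : Tendsto (fun s : ℝ => Real.exp (-s^2)) atTop (nhds 0) := by
      apply Real.tendsto_exp_atBot.comp
      exact tendsto_neg_atBot_iff.mpr (tendsto_pow_atTop two_ne_zero)
    apply squeeze_zero_norm _ hb
    intro s
    rw [norm_neg, norm_mul, Real.norm_eq_abs, Real.norm_eq_abs, Real.abs_exp]
    nlinarith [abs_cos_le_one (2*y*s), Real.exp_pos (-s^2), abs_nonneg (Real.cos (2*y*s))]
  have := integral_Ioi_of_hasDerivAt_of_tendsto' hderiv hint htend
  rw [integral_add ((intOn_sin (2*y)).const_mul (2*y)) (intOn_cos (2*y))] at this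
  rw [MeasureTheory.integral_const_mul] at this
  have h0 : -(Real.cos (2*y*0) * Real.exp (-(0:ℝ)^2)) = -1 := by norm_num
  rw [h0] at this
  have : 2*y*Gd y + ∫ s in Ioi (0:ℝ), 2*s*Real.cos (2*y*s) * Real.exp (-s^2) = 1 := by
    rw [Gd]; linarith
  linarith

lemma Gd_eq (y : ℝ) : Gd y = Real.exp (-y^2) * ∫ t in (0:ℝ)..y, Real.exp (t^2) := by
  have hH : ∀ x : ℝ, HasDerivAt (fun x => Real.exp (x^2) * Gd x) (Real.exp (x^2)) x := by
    intro x
    have h1 : HasDerivAt (fun x : ℝ => Real.exp (x^2)) (Real.exp (x^2) * (2*x)) x := by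
      simpa [mul_comm] using (hasDerivAt_pow 2 x).exp
    have h2 := (Gd_hasDeriv x)
    rw [parts x] at h2
    have := h1.fun_mul h2
    exact this.congr_deriv (by ring)
  have hInt : ∀ x : ℝ, IntervalIntegrable (fun x => Real.exp (x^2)) volume 0 x := fun x =>
    (Real.continuous_exp.comp (continuous_pow 2)).intervalIntegrable 0 x
  have := intervalIntegral.integral_eq_sub_of_hasDerivAt (f := fun x => Real.exp (x^2) * Gd x)
    (a := 0) (b := y) (fun t _ => hH t) (hInt y)
  have hG0 : Gd 0 = 0 := by simp [Gd]
  simp only [zero_pow two_ne_zero, Real.exp_zero] at this; rw [hG0] at this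
  simp only [mul_zero, sub_zero] at this
  have hpos := Real.exp_pos (y^2)
  rw [this, ← mul_assoc, ← Real.exp_add, neg_add_cancel, Real.exp_zero, one_mul]

lemma sqrt_fourpia (a : ℝ) (ha : 0 < a) : Real.sqrt (4*Real.pi*a^2) = 2*a*Real.sqrt Real.pi := by
  have h : 4*Real.pi*a^2 = (2*a*Real.sqrt Real.pi)^2 := by
    rw [mul_pow, mul_pow, Real.sq_sqrt Real.pi_nonneg]; ring
  rw [h, Real.sqrt_sq (by positivity)]

lemma oneD_nosign (a c : ℝ) (ha : 0 < a) :
    ∫ t : ℝ, Complex.exp (Complex.I * ((c * t : ℝ) : ℂ)) *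
      ((((2*a*Real.sqrt Real.pi)⁻¹ : ℝ) : ℂ) * Complex.exp (((-t^2/(4*a^2) : ℝ)) : ℂ)) =
    ((Real.exp (-a^2*c^2) : ℝ) : ℂ) := by
  have hb : (0:ℝ) < ((1/(4*a^2) : ℂ)).re := by
    have : ((1/(4*a^2) : ℂ)) = ((1/(4*a^2) : ℝ) : ℂ) := by push_cast; ring
    rw [this, Complex.ofReal_re]
    positivity
  have key := fourierIntegral_gaussian (b := (1/(4*a^2) : ℂ)) hb (c : ℂ)
  have heq : ∀ t : ℝ, Complex.exp (Complex.I * ((c * t : ℝ) : ℂ)) *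
      ((((2*a*Real.sqrt Real.pi)⁻¹ : ℝ) : ℂ) * Complex.exp (((-t^2/(4*a^2) : ℝ)) : ℂ)) =
      (((2*a*Real.sqrt Real.pi)⁻¹ : ℝ) : ℂ) *
        (Complex.exp (Complex.I * c * t) * Complex.exp (-(1/(4*a^2):ℂ) * t^2)) := by
    intro t
    have h1 : (((-t^2/(4*a^2) : ℝ)) : ℂ) = -(1/(4*a^2):ℂ) * (t:ℂ)^2 := by
      push_cast; ring
    have h2 : Complex.I * ((c * t : ℝ) : ℂ) = Complex.I * (c:ℂ) * (t:ℂ) := by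
      push_cast; ring
    rw [h1, h2]; ring
  rw [integral_congr_ae (Eventually.of_forall heq), MeasureTheory.integral_const_mul, key]
  have hpb : ((Real.pi : ℂ) / (1/(4*a^2):ℂ)) = ((4*Real.pi*a^2 : ℝ) : ℂ) := by
    have ha' : (a:ℂ) ≠ 0 := by exact_mod_cast ha.ne'
    push_cast
    field_simp
  rw [hpb]
  have hcpow : ((4*Real.pi*a^2 : ℝ) : ℂ) ^ (1/2 : ℂ) = ((2*a*Real.sqrt Real.pi : ℝ) : ℂ) := by
    have h0 : (0:ℝ) ≤ 4*Real.pi*a^2 := by positivity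
    have := Complex.ofReal_cpow h0 (1/2)
    rw [← Real.sqrt_eq_rpow, sqrt_fourpia a ha] at this
    rw [show ((1/2 : ℝ) : ℂ) = (1/2 : ℂ) by norm_num] at this
    rw [← this]
  rw [hcpow]
  have harg : -(c:ℂ)^2 / (4 * (1/(4*a^2):ℂ)) = ((-a^2*c^2 : ℝ) : ℂ) := by
    have ha' : (a:ℂ) ≠ 0 := by exact_mod_cast ha.ne'
    push_cast
    field_simp
  rw [harg, ← Complex.ofReal_exp]
  have hne : ((2*a*Real.sqrt Real.pi : ℝ) : ℂ) ≠ 0 := by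
    simp only [ne_eq, Complex.ofReal_eq_zero]
    positivity
  rw [Complex.ofReal_inv, inv_mul_cancel_left₀ hne]

lemma measurable_sign : Measurable Real.sign := by
  unfold Real.sign
  exact Measurable.ite (measurableSet_lt measurable_id measurable_const) measurable_const
    (Measurable.ite (measurableSet_lt measurable_const measurable_id) measurable_const
      measurable_const)

lemma intg (a : ℝ) (ha : 0 < a) :
    Integrable (fun t : ℝ => Real.exp (-t^2/(4*a^2))) := by
  have h := integrable_exp_neg_mul_sq (b := 1/(4*a^2)) (by positivity)
  refine h.congr ?_
  filter_upwards with t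
  congr 1
  field_simp

lemma int_sign_sin (a c : ℝ) (ha : 0 < a) :
    Integrable (fun t : ℝ => Real.sign t * Real.sin (c*t) * Real.exp (-t^2/(4*a^2))) := by
  refine (intg a ha).mono' ?_ ?_
  · refine (AEMeasurable.mul ?_ ?_).aestronglyMeasurable
    · exact (measurable_sign.aemeasurable).mul
        ((Real.continuous_sin.comp (continuous_const.mul continuous_id)).measurable.aemeasurable)
    · exact (Real.continuous_exp.comp ((continuous_pow 2).neg.div_const _)).measurable.aemeasurable
  · filter_upwards with t
    rw [Real.norm_eq_abs, abs_mul, abs_mul, Real.abs_exp]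
    have h1 : |Real.sign t| ≤ 1 := by
      rcases Real.sign_apply_eq t with h|h|h <;> rw [h] <;> norm_num
    have h2 : |Real.sign t| * |Real.sin (c*t)| ≤ 1 :=
      mul_le_one₀ h1 (abs_nonneg _) (abs_sin_le_one _)
    exact mul_le_of_le_one_left (Real.exp_pos _).le h2

lemma int_sign_cos (a c : ℝ) (ha : 0 < a) :
    Integrable (fun t : ℝ => Real.sign t * Real.cos (c*t) * Real.exp (-t^2/(4*a^2))) := by
  refine (intg a ha).mono' ?_ ?_
  · refine (AEMeasurable.mul ?_ ?_).aestronglyMeasurable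
    · exact (measurable_sign.aemeasurable).mul
        ((Real.continuous_cos.comp (continuous_const.mul continuous_id)).measurable.aemeasurable)
    · exact (Real.continuous_exp.comp ((continuous_pow 2).neg.div_const _)).measurable.aemeasurable
  · filter_upwards with t
    rw [Real.norm_eq_abs, abs_mul, abs_mul, Real.abs_exp]
    have h1 : |Real.sign t| ≤ 1 := by
      rcases Real.sign_apply_eq t with h|h|h <;> rw [h] <;> norm_num
    have h2 : |Real.sign t| * |Real.cos (c*t)| ≤ 1 :=
      mul_le_one₀ h1 (abs_nonneg _) (abs_cos_le_one _)
    exact mul_le_of_le_one_left (Real.exp_pos _).le h2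

lemma odd_vanish (a c : ℝ) (ha : 0 < a) :
    ∫ t : ℝ, Real.sign t * Real.cos (c*t) * Real.exp (-t^2/(4*a^2)) = 0 := by
  set u := fun t : ℝ => Real.sign t * Real.cos (c*t) * Real.exp (-t^2/(4*a^2)) with hu
  have hodd : ∀ t, u (-t) = - u t := by
    intro t
    simp only [hu]
    rw [Real.sign_neg, neg_sq, show c * -t = -(c*t) by ring, Real.cos_neg]
    ring
  have h1 : ∫ t, u (-t) = ∫ t, u t := integral_neg_eq_self u volume
  rw [integral_congr_ae (Eventually.of_forall (fun t => hodd t)), integral_neg] at h1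
  linarith

lemma aux_complex (x y s k g : ℂ) :
    (x + y*Complex.I) * (-Complex.I * s) * (k * g)
      = k*(s*y*g) + (-Complex.I)*(k*(s*x*g)) := by
  linear_combination (-(k*g*s*y)) * Complex.I_sq

lemma oneD_sign (a c : ℝ) (ha : 0 < a) :
    ∫ t : ℝ, Complex.exp (Complex.I * ((c * t : ℝ):ℂ)) * (-Complex.I * ((Real.sign t : ℝ):ℂ)) *
      ((((2*a*Real.sqrt Real.pi)⁻¹ : ℝ):ℂ) * Complex.exp (((-t^2/(4*a^2) : ℝ)):ℂ)) =
    ((Real.exp (-a^2*c^2) * erfi (a*c) : ℝ):ℂ) := by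
  set k : ℝ := (2*a*Real.sqrt Real.pi)⁻¹ with hk
  have hpt : ∀ t : ℝ, Complex.exp (Complex.I * ((c * t : ℝ):ℂ)) *
      (-Complex.I * ((Real.sign t : ℝ):ℂ)) * (((k : ℝ):ℂ) * Complex.exp (((-t^2/(4*a^2) : ℝ)):ℂ))
      = (((k * (Real.sign t * Real.sin (c*t) * Real.exp (-t^2/(4*a^2))) : ℝ)):ℂ)
        + (-Complex.I) * (((k * (Real.sign t * Real.cos (c*t) * Real.exp (-t^2/(4*a^2))) : ℝ)):ℂ) := by
    intro t
    rw [show Complex.I * ((c * t : ℝ):ℂ) = ((c * t : ℝ):ℂ) * Complex.I from mul_comm _ _,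
      Complex.exp_mul_I, ← Complex.ofReal_exp]
    push_cast
    exact aux_complex _ _ _ _ _
  rw [integral_congr_ae (Eventually.of_forall hpt)]
  have hv := int_sign_sin a c ha
  have hu := int_sign_cos a c ha
  have h1 : Integrable (fun t : ℝ =>
      (((k * (Real.sign t * Real.sin (c*t) * Real.exp (-t^2/(4*a^2))) : ℝ)):ℂ)) := by
    exact (hv.const_mul k).ofReal
  have h2 : Integrable (fun t : ℝ => (-Complex.I) *
      (((k * (Real.sign t * Real.cos (c*t) * Real.exp (-t^2/(4*a^2))) : ℝ)):ℂ)) := by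
    exact ((hu.const_mul k).ofReal).const_mul (-Complex.I)
  rw [integral_add h1 h2]
  have hre1 : (∫ t : ℝ, (((k * (Real.sign t * Real.sin (c*t) * Real.exp (-t^2/(4*a^2))) : ℝ)):ℂ))
      = (((∫ t : ℝ, k * (Real.sign t * Real.sin (c*t) * Real.exp (-t^2/(4*a^2)))) : ℝ) : ℂ) := by
    exact integral_ofReal
  have hre2 : (∫ t : ℝ, (((k * (Real.sign t * Real.cos (c*t) * Real.exp (-t^2/(4*a^2))) : ℝ)):ℂ))
      = (((∫ t : ℝ, k * (Real.sign t * Real.cos (c*t) * Real.exp (-t^2/(4*a^2)))) : ℝ) : ℂ) := by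
    exact integral_ofReal
  rw [MeasureTheory.integral_const_mul, hre1, hre2]
  rw [MeasureTheory.integral_const_mul, MeasureTheory.integral_const_mul, odd_vanish a c ha]
  simp only [mul_zero, Complex.ofReal_zero, add_zero]
  norm_cast
  -- now real goal : k * ∫ v = exp(-a²c²) * erfi (a c)
  have hvw : ∀ t : ℝ, Real.sign t * Real.sin (c*t) * Real.exp (-t^2/(4*a^2))
      = (fun s => Real.sin (c*s) * Real.exp (-s^2/(4*a^2))) |t| := by
    intro t
    rcases lt_trichotomy t 0 with h|h|h
    · rw [Real.sign_of_neg h, abs_of_neg h]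
      simp only [mul_neg, Real.sin_neg, neg_sq]
      ring
    · simp [h]
    · rw [Real.sign_of_pos h, abs_of_pos h]
      ring
  rw [integral_congr_ae (Eventually.of_forall hvw),
    integral_comp_abs (f := fun s => Real.sin (c*s) * Real.exp (-s^2/(4*a^2)))]
  have hsub := integral_comp_mul_left_Ioi
    (fun s => Real.sin (c*s) * Real.exp (-s^2/(4*a^2))) 0 (b := 2*a) (by positivity)
  rw [mul_zero] at hsub
  have h2a : (2*a) * ((2*a)⁻¹ • ∫ x in Ioi (0:ℝ), Real.sin (c*x) * Real.exp (-x^2/(4*a^2)))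
      = ∫ x in Ioi (0:ℝ), Real.sin (c*x) * Real.exp (-x^2/(4*a^2)) := by
    rw [smul_eq_mul, ← mul_assoc, mul_inv_cancel₀ (by positivity), one_mul]
  rw [← h2a, ← hsub]
  have hGd : (∫ x in Ioi (0:ℝ), Real.sin (c*(2*a*x)) * Real.exp (-(2*a*x)^2/(4*a^2))) = Gd (a*c) := by
    rw [Gd]
    apply integral_congr_ae (Eventually.of_forall _)
    intro s
    have h1 : c*(2*a*s) = 2*(a*c)*s := by ring
    have h2 : -(2*a*s)^2/(4*a^2) = -s^2 := by
      field_simp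
      ring
    rw [h1, h2]
  rw [hGd, Gd_eq]
  rw [erfi]
  have hπ : Real.sqrt Real.pi > 0 := Real.sqrt_pos.mpr Real.pi_pos
  have : -(a*c)^2 = -a^2*c^2 := by ring
  rw [this]
  rw [hk]
  field_simp

/-- directional Hilbert transform of the d-dimensional
squared-exponential covariance:
`∫ e^{i⟨h,x⟩}(−i sign⟨x,xt⟩)(2a√π)^{−d} e^{−‖x‖²/(4a²)} dx = e^{−a²‖h‖²} erfi(a⟨h,xt⟩)`. -/
theorem stmt6 (d : ℕ) (a : ℝ) (ha : 0 < a)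
    (xt h : EuclideanSpace ℝ (Fin d)) (hxt : ‖xt‖ = 1) :
    ∫ x : EuclideanSpace ℝ (Fin d),
        Complex.exp (Complex.I * (((inner ℝ h x : ℝ) : ℝ) : ℂ)) *
          (-Complex.I * ((Real.sign (inner ℝ x xt : ℝ) : ℝ) : ℂ)) *
          ((((((2 * a * Real.sqrt Real.pi) ^ d)⁻¹ : ℝ)) : ℂ) *
            Complex.exp (((-‖x‖ ^ 2 / (4 * a ^ 2) : ℝ)) : ℂ)) =
    ((Real.exp (-a ^ 2 * ‖h‖ ^ 2) * erfi (a * (inner ℝ h xt : ℝ)) : ℝ) : ℂ) := by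
  classical
  have hd : 0 < d := by
    rcases Nat.eq_zero_or_pos d with h0 | hp
    · exfalso
      subst h0
      have : xt = 0 := Subsingleton.elim _ _
      rw [this, norm_zero] at hxt
      norm_num at hxt
    · exact hp
  set i0 : Fin d := ⟨0, hd⟩ with hi0
  -- orthonormal basis with b i0 = xt
  have hon : Orthonormal ℝ (({i0} : Set (Fin d)).restrict (fun _ : Fin d => xt)) := by
    constructor
    · intro i
      exact hxt
    · rintro ⟨i, hi⟩ ⟨j, hj⟩ hij
      simp only [Set.mem_singleton_iff] at hi hj
      exact absurd (Subtype.ext (hi.trans hj.symm)) hij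
  obtain ⟨b, hb⟩ := hon.exists_orthonormalBasis_extension_of_card_eq
    (by simp [finrank_euclideanSpace])
  have hbx : b i0 = xt := hb i0 (Set.mem_singleton i0)
  set c : EuclideanSpace ℝ (Fin d) := b.repr h with hc
  set f : Fin d → ℝ → ℂ := fun i t =>
    Complex.exp (Complex.I * ((c i * t : ℝ):ℂ)) *
      (if i = i0 then -Complex.I * ((Real.sign t : ℝ):ℂ) else 1) *
      ((((2*a*Real.sqrt Real.pi)⁻¹ : ℝ):ℂ) * Complex.exp (((-t^2/(4*a^2) : ℝ)):ℂ)) with hf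
  -- change of variables by b.repr.symm
  rw [← (b.measurePreserving_measurableEquiv.symm).integral_comp' (fun x =>
    Complex.exp (Complex.I * (((inner ℝ h x : ℝ) : ℝ) : ℂ)) *
      (-Complex.I * ((Real.sign (inner ℝ x xt : ℝ) : ℝ) : ℂ)) *
      ((((((2 * a * Real.sqrt Real.pi) ^ d)⁻¹ : ℝ)) : ℂ) *
        Complex.exp (((-‖x‖ ^ 2 / (4 * a ^ 2) : ℝ)) : ℂ)))]
  -- pointwise rewrite into product form
  have hpt : ∀ y : EuclideanSpace ℝ (Fin d),
      Complex.exp (Complex.I * (((inner ℝ h (b.measurableEquiv.symm y) : ℝ) : ℝ) : ℂ)) *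
        (-Complex.I * ((Real.sign (inner ℝ (b.measurableEquiv.symm y) xt : ℝ) : ℝ) : ℂ)) *
        ((((((2 * a * Real.sqrt Real.pi) ^ d)⁻¹ : ℝ)) : ℂ) *
          Complex.exp (((-‖(b.measurableEquiv.symm y : EuclideanSpace ℝ (Fin d))‖ ^ 2 / (4 * a ^ 2) : ℝ)) : ℂ))
      = ∏ i, f i (y i) := by
    intro y
    have hco : (b.measurableEquiv.symm y : EuclideanSpace ℝ (Fin d)) = b.repr.symm y := rfl
    have h1 : (inner ℝ h (b.repr.symm y) : ℝ) = ∑ i, c i * y i := by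
      rw [← b.repr.inner_map_map h (b.repr.symm y), LinearIsometryEquiv.apply_symm_apply, ← hc]
      rw [PiLp.inner_apply]
      simp [RCLike.inner_apply]
      exact Finset.sum_congr rfl (fun i _ => mul_comm _ _)
    have h2 : (inner ℝ (b.repr.symm y) xt : ℝ) = y i0 := by
      rw [← b.repr.inner_map_map (b.repr.symm y) xt, LinearIsometryEquiv.apply_symm_apply,
        ← hbx, b.repr_self]
      rw [EuclideanSpace.inner_single_right]
      simp
    have h3 : ‖(b.repr.symm y : EuclideanSpace ℝ (Fin d))‖^2 = ∑ i, (y i)^2 := by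
      rw [b.repr.symm.norm_map y, EuclideanSpace.norm_eq,
        Real.sq_sqrt (by positivity)]
      congr 1
      ext i
      rw [Real.norm_eq_abs, _root_.sq_abs]
    rw [hco, h1, h2, h3]
    -- now purely a product identity
    rw [hf]
    simp only []
    rw [Finset.prod_mul_distrib, Finset.prod_mul_distrib]
    congr 1
    · congr 1
      · rw [← Complex.exp_sum]
        congr 1
        rw [Complex.ofReal_sum]
        rw [Finset.mul_sum]
      · rw [Finset.prod_eq_single i0 (fun j _ hj => if_neg hj) (by simp)]
        rw [if_pos rfl]
    · rw [Finset.prod_mul_distrib, Finset.prod_const, ← Complex.exp_sum]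
      congr 1
      · rw [Finset.card_univ, Fintype.card_fin]
        norm_cast
        rw [inv_pow]
      · rw [← Complex.ofReal_sum]
        congr 1
        rw [neg_div, Finset.sum_div]
        simp only [neg_div]
        rw [← Finset.sum_neg_distrib]
  rw [integral_congr_ae (Eventually.of_forall hpt)]
  -- change to pi measure
  rw [← ((EuclideanSpace.volume_preserving_symm_measurableEquiv_toLp (Fin d)).symm).integral_comp'
    (fun y : EuclideanSpace ℝ (Fin d) => ∏ i, f i (y i))]
  have hcoord : ∀ (z : Fin d → ℝ) (i : Fin d),
      ((MeasurableEquiv.toLp 2 (Fin d → ℝ)).symm.symm z) i = z i := fun _ _ => rfl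
  have : (fun z : Fin d → ℝ => ∏ i, f i (((MeasurableEquiv.toLp 2 (Fin d → ℝ)).symm.symm z) i))
      = fun z => ∏ i, f i (z i) := by
    funext z
    simp only [hcoord]
  rw [this]
  rw [MeasureTheory.integral_fintype_prod_volume_eq_prod f]
  have hint : ∀ i, (∫ t : ℝ, f i t)
      = ((Real.exp (-a^2 * (c i)^2) : ℝ):ℂ) * (if i = i0 then ((erfi (a * c i0) : ℝ):ℂ) else 1) := by
    intro i
    by_cases hi : i = i0
    · subst hi
      rw [if_pos rfl, hf]
      simp only [eq_self_iff_true, if_true]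
      rw [oneD_sign a (c i0) ha, Complex.ofReal_mul]
    · rw [if_neg hi, hf, mul_one]
      simp only [if_neg hi, mul_one]
      rw [oneD_nosign a (c i) ha]
  rw [Finset.prod_congr rfl (fun i _ => hint i), Finset.prod_mul_distrib]
  have hsum : ∑ i, (c i)^2 = ‖h‖^2 := by
    rw [← b.repr.norm_map h, ← hc, EuclideanSpace.norm_eq, Real.sq_sqrt (by positivity)]
    congr 1
    ext i
    rw [Real.norm_eq_abs, _root_.sq_abs]
  have hprod1 : (∏ i, ((Real.exp (-a^2 * (c i)^2) : ℝ):ℂ)) = ((Real.exp (-a^2 * ‖h‖^2) : ℝ):ℂ) := by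
    rw [← Complex.ofReal_prod, ← Real.exp_sum]
    congr 2
    rw [← Finset.mul_sum, hsum]
  have hprod2 : (∏ i, (if i = i0 then ((erfi (a * c i0) : ℝ):ℂ) else 1))
      = ((erfi (a * c i0) : ℝ):ℂ) := by
    rw [Finset.prod_eq_single i0 (fun j _ hj => if_neg hj) (by simp), if_pos rfl]
  rw [hprod1, hprod2]
  have hci0 : c i0 = (inner ℝ h xt : ℝ) := by
    rw [hc, b.repr_apply_apply, hbx, real_inner_comm]
  rw [hci0, ← Complex.ofReal_mul]
end

section
/- With the Gamma mixing density g(v) = a^{-2α} Γ(α)^{-1} v^{α-1} exp(-v/a²) with α = 1/2, one has ∫₀^∞ exp(-v‖h‖²) erfi(√v⟨h,x̃⟩) g(v) dv = (a²‖h‖²+1)^{-1/2} (2/π) artanh( a⟨h,x̃⟩ / √(a²‖h‖²+1) ) for every h ∈ ℝ^d and unit vector x̃ ∈ ℝ^d. -/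
open MeasureTheory

/-- The inverse hyperbolic tangent `artanh(x) = (1/2) log((1+x)/(1−x))`. -/
noncomputable def artanh (x : ℝ) : ℝ := (1/2) * Real.log ((1 + x) / (1 - x))

open Set intervalIntegral in
lemma artanh_zero : artanh 0 = 0 := by simp [artanh]

lemma artanh_neg (x : ℝ) : artanh (-x) = - artanh x := by
  unfold artanh
  rw [show (1 + -x) / (1 - -x) = ((1 + x) / (1 - x))⁻¹ by rw [inv_div]; ring_nf,
    Real.log_inv]
  ring

lemma hasDerivAt_artanh {x : ℝ} (hx : |x| < 1) :
    HasDerivAt artanh (1 / (1 - x ^ 2)) x := by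
  obtain ⟨hx1, hx2⟩ := abs_lt.mp hx
  have h1 : (0:ℝ) < 1 + x := by linarith
  have h2 : (0:ℝ) < 1 - x := by linarith
  have hq : HasDerivAt (fun y : ℝ => (1 + y) / (1 - y))
      (((1:ℝ) * (1 - x) - (1 + x) * (-1)) / (1 - x) ^ 2) x := by
    have hnum : HasDerivAt (fun y : ℝ => 1 + y) 1 x := by
      simpa using (hasDerivAt_id x).const_add (1:ℝ)
    have hden : HasDerivAt (fun y : ℝ => 1 - y) (-1) x := by
      simpa using (hasDerivAt_id x).const_sub (1:ℝ)
    exact hnum.div hden h2.ne'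
  have hpos : (0:ℝ) < (1 + x) / (1 - x) := div_pos h1 h2
  have hlog := (hq.log hpos.ne').const_mul (1/2 : ℝ)
  have hne : (1:ℝ) - x ^ 2 ≠ 0 := by nlinarith
  refine hlog.congr_deriv ?_
  field_simp
  ring

lemma integral_even_neg (f : ℝ → ℝ) (hf : ∀ t, f (-t) = f t) (z : ℝ) :
    (∫ t in (0:ℝ)..(-z), f t) = - ∫ t in (0:ℝ)..z, f t := by
  calc (∫ t in (0:ℝ)..(-z), f t) = ∫ t in (0:ℝ)..(-z), f (-t) := by
        simp only [hf]
    _ = ∫ t in (z:ℝ)..(0:ℝ), f t := by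
        rw [intervalIntegral.integral_comp_neg f]; norm_num
    _ = - ∫ t in (0:ℝ)..z, f t := intervalIntegral.integral_symm 0 z

lemma erfi_neg (z : ℝ) : erfi (-z) = - erfi z := by
  unfold erfi
  rw [integral_even_neg _ (fun t => by simp) z]
  ring

lemma erfi_sqrt_mul {v : ℝ} (hv : 0 < v) (c : ℝ) :
    erfi (Real.sqrt v * c)
      = (2 / Real.sqrt Real.pi) * Real.sqrt v * ∫ s in (0:ℝ)..c, Real.exp (v * s ^ 2) := by
  unfold erfi
  have hs : (0:ℝ) < Real.sqrt v := Real.sqrt_pos.mpr hv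
  have h1 : (∫ s in (0:ℝ)..c, Real.exp (v * s ^ 2))
      = ∫ s in (0:ℝ)..c, Real.exp ((Real.sqrt v * s) ^ 2) := by
    apply intervalIntegral.integral_congr
    intro s _
    simp only [mul_pow, Real.sq_sqrt hv.le]
  rw [h1, intervalIntegral.integral_comp_mul_left (fun t => Real.exp (t ^ 2)) hs.ne',
    mul_zero, smul_eq_mul]
  field_simp

lemma integral_exp_neg_mul_Ioi_zero {b : ℝ} (hb : 0 < b) :
    ∫ v in Set.Ioi (0:ℝ), Real.exp (-(b * v)) = b⁻¹ := by
  have := integral_comp_mul_left_Ioi (fun x => Real.exp (-x)) 0 hb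
  simp only [mul_zero, smul_eq_mul] at this
  rw [integral_exp_neg_Ioi_zero] at this
  simpa using this

open Set in
lemma core_nonneg {β c : ℝ} (hc0 : 0 ≤ c) (hc : c ^ 2 < β) :
    (∫ v in Ioi (0:ℝ), Real.exp (-(β * v)) * ∫ s in (0:ℝ)..c, Real.exp (v * s ^ 2))
      = (Real.sqrt β)⁻¹ * artanh (c / Real.sqrt β) := by
  have hβ : 0 < β := lt_of_le_of_lt (sq_nonneg c) hc
  have hsβ : 0 < Real.sqrt β := Real.sqrt_pos.mpr hβ
  have hsβsq : Real.sqrt β ^ 2 = β := Real.sq_sqrt hβ.le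
  have hcβ : c < Real.sqrt β := by
    nlinarith [Real.sq_sqrt hβ.le, Real.sqrt_nonneg β]
  -- rewrite as an iterated set integral
  have step1 : (∫ v in Ioi (0:ℝ), Real.exp (-(β * v)) * ∫ s in (0:ℝ)..c, Real.exp (v * s ^ 2))
      = ∫ v in Ioi (0:ℝ), ∫ s in Ioc (0:ℝ) c, Real.exp (-((β - s ^ 2) * v)) := by
    apply setIntegral_congr_fun measurableSet_Ioi
    intro v _
    simp only []
    rw [intervalIntegral.integral_of_le hc0, ← integral_const_mul]
    apply setIntegral_congr_fun measurableSet_Ioc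
    intro s _
    simp only []
    rw [← Real.exp_add]
    congr 1
    ring
  rw [step1]
  -- Fubini
  have hδ : 0 < β - c ^ 2 := by linarith
  have hint : Integrable (Function.uncurry fun (v s : ℝ) => Real.exp (-((β - s ^ 2) * v)))
      ((volume.restrict (Ioi (0:ℝ))).prod (volume.restrict (Ioc (0:ℝ) c))) := by
    have hg : Integrable (fun p : ℝ × ℝ => Real.exp (-(β - c ^ 2) * p.1) * 1)
        ((volume.restrict (Ioi (0:ℝ))).prod (volume.restrict (Ioc (0:ℝ) c))) :=
      Integrable.mul_prod (exp_neg_integrableOn_Ioi 0 hδ) (integrable_const 1)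
    refine hg.mono ?_ ?_
    · apply Continuous.aestronglyMeasurable
      apply Real.continuous_exp.comp
      continuity
    · rw [Measure.prod_restrict]
      refine (ae_restrict_iff' (measurableSet_Ioi.prod measurableSet_Ioc)).mpr
        (Filter.Eventually.of_forall ?_)
      rintro ⟨v, s⟩ ⟨hv, hs⟩
      simp only [Function.uncurry, Real.norm_eq_abs, Real.abs_exp, mul_one]
      apply Real.exp_le_exp.mpr
      have hs2 : s ^ 2 ≤ c ^ 2 := by
        have := hs.1; have := hs.2; nlinarith
      have hv0 : (0:ℝ) ≤ v := le_of_lt hv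
      nlinarith
  have step2 : (∫ v in Ioi (0:ℝ), ∫ s in Ioc (0:ℝ) c, Real.exp (-((β - s ^ 2) * v)))
      = ∫ s in Ioc (0:ℝ) c, ∫ v in Ioi (0:ℝ), Real.exp (-((β - s ^ 2) * v)) :=
    integral_integral_swap hint
  rw [step2]
  -- inner integral
  have step3 : (∫ s in Ioc (0:ℝ) c, ∫ v in Ioi (0:ℝ), Real.exp (-((β - s ^ 2) * v)))
      = ∫ s in Ioc (0:ℝ) c, (β - s ^ 2)⁻¹ := by
    apply setIntegral_congr_fun measurableSet_Ioc
    intro s hs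
    have hs2 : s ^ 2 < β := by
      have := hs.1; have := hs.2; nlinarith
    exact integral_exp_neg_mul_Ioi_zero (by linarith)
  rw [step3, ← intervalIntegral.integral_of_le hc0]
  -- FTC
  have hderiv : ∀ s ∈ Set.uIcc (0:ℝ) c,
      HasDerivAt (fun s => (Real.sqrt β)⁻¹ * artanh (s / Real.sqrt β)) ((β - s ^ 2)⁻¹) s := by
    intro s hs
    rw [Set.uIcc_of_le hc0] at hs
    have hs2 : s ^ 2 < β := by
      have := hs.1; have := hs.2; nlinarith
    have habs : |s / Real.sqrt β| < 1 := by
      rw [abs_div, abs_of_pos hsβ, div_lt_one hsβ]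
      nlinarith [abs_nonneg s, sq_abs s]
    have hinner : HasDerivAt (fun s : ℝ => s / Real.sqrt β) (Real.sqrt β)⁻¹ s := by
      simpa [div_eq_mul_inv] using (hasDerivAt_id s).mul_const (Real.sqrt β)⁻¹
    have := ((hasDerivAt_artanh habs).comp s hinner).const_mul (Real.sqrt β)⁻¹
    refine this.congr_deriv ?_
    rw [div_pow, hsβsq]
    field_simp
    rw [hsβsq]
  have hcont : IntervalIntegrable (fun s => (β - s ^ 2)⁻¹) volume 0 c := by
    apply ContinuousOn.intervalIntegrable
    apply ContinuousOn.inv₀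
    · fun_prop
    · intro s hs
      rw [Set.uIcc_of_le hc0] at hs
      have := hs.1; have := hs.2
      nlinarith
  rw [intervalIntegral.integral_eq_sub_of_hasDerivAt hderiv hcont]
  simp [artanh_zero]

open Set in
lemma core {β c : ℝ} (hc : c ^ 2 < β) :
    (∫ v in Ioi (0:ℝ), Real.exp (-(β * v)) * ∫ s in (0:ℝ)..c, Real.exp (v * s ^ 2))
      = (Real.sqrt β)⁻¹ * artanh (c / Real.sqrt β) := by
  rcases le_or_gt 0 c with hc0 | hc0
  · exact core_nonneg hc0 hc
  · have hodd : ∀ v : ℝ, (∫ s in (0:ℝ)..c, Real.exp (v * s ^ 2))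
        = - ∫ s in (0:ℝ)..(-c), Real.exp (v * s ^ 2) := by
      intro v
      have := integral_even_neg (fun s => Real.exp (v * s ^ 2)) (fun s => by simp) (-c)
      rw [neg_neg] at this
      exact this
    calc (∫ v in Ioi (0:ℝ), Real.exp (-(β * v)) * ∫ s in (0:ℝ)..c, Real.exp (v * s ^ 2))
        = ∫ v in Ioi (0:ℝ), -(Real.exp (-(β * v)) * ∫ s in (0:ℝ)..(-c), Real.exp (v * s ^ 2)) := by
          apply setIntegral_congr_fun measurableSet_Ioi
          intro v _
          simp only []
          rw [hodd v]; ring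
      _ = -(∫ v in Ioi (0:ℝ), Real.exp (-(β * v)) * ∫ s in (0:ℝ)..(-c), Real.exp (v * s ^ 2)) :=
          integral_neg _
      _ = -((Real.sqrt β)⁻¹ * artanh (-c / Real.sqrt β)) := by
          rw [core_nonneg (by linarith) (by rwa [neg_sq])]
      _ = (Real.sqrt β)⁻¹ * artanh (c / Real.sqrt β) := by
          rw [neg_div, artanh_neg]; ring

/-- Cauchy (α = 1/2) asymmetric cross-covariance: mixing the Gaussian
asymmetric part against the Gamma(1/2, a²) density
`g(v) = a⁻¹ Γ(1/2)⁻¹ v^{−1/2} e^{−v/a²}` (with `Γ(1/2) = √π`) gives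
`(a²‖h‖²+1)^{−1/2} (2/π) artanh(a⟨h,xt⟩/√(a²‖h‖²+1))`. -/
theorem stmt9 (d : ℕ) (a : ℝ) (ha : 0 < a)
    (xt : EuclideanSpace ℝ (Fin d)) (hxt : ‖xt‖ = 1) (h : EuclideanSpace ℝ (Fin d)) :
    ∫ v in Set.Ioi (0:ℝ),
        Real.exp (-v * ‖h‖ ^ 2) * erfi (Real.sqrt v * (inner ℝ h xt : ℝ)) *
          (a⁻¹ * (Real.sqrt Real.pi)⁻¹ * v ^ (-(1:ℝ)/2) * Real.exp (-v / a ^ 2)) =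
    (Real.sqrt (a ^ 2 * ‖h‖ ^ 2 + 1))⁻¹ * (2 / Real.pi) *
      artanh (a * (inner ℝ h xt : ℝ) / Real.sqrt (a ^ 2 * ‖h‖ ^ 2 + 1)) := by
  set c : ℝ := (inner ℝ h xt : ℝ) with hcdef
  set β : ℝ := ‖h‖ ^ 2 + (a ^ 2)⁻¹ with hβdef
  have hπ : (0:ℝ) < Real.pi := Real.pi_pos
  have hsπ : (0:ℝ) < Real.sqrt Real.pi := Real.sqrt_pos.mpr hπ
  have hcs : c ^ 2 ≤ ‖h‖ ^ 2 := by
    have := abs_real_inner_le_norm h xt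
    rw [hxt, mul_one] at this
    calc c ^ 2 = |c| ^ 2 := (sq_abs c).symm
      _ ≤ ‖h‖ ^ 2 := by nlinarith [abs_nonneg c]
  have ha2 : (0:ℝ) < a ^ 2 := by positivity
  have hcβ : c ^ 2 < β := by
    have : (0:ℝ) < (a ^ 2)⁻¹ := by positivity
    simp only [hβdef]; linarith
  have step : (∫ v in Set.Ioi (0:ℝ),
        Real.exp (-v * ‖h‖ ^ 2) * erfi (Real.sqrt v * c) *
          (a⁻¹ * (Real.sqrt Real.pi)⁻¹ * v ^ (-(1:ℝ)/2) * Real.exp (-v / a ^ 2)))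
      = ∫ v in Set.Ioi (0:ℝ),
          (2 / (a * Real.pi)) * (Real.exp (-(β * v)) * ∫ s in (0:ℝ)..c, Real.exp (v * s ^ 2)) := by
    apply setIntegral_congr_fun measurableSet_Ioi
    intro v hv
    simp only []
    have hv0 : (0:ℝ) < v := hv
    have hsv : (0:ℝ) < Real.sqrt v := Real.sqrt_pos.mpr hv0
    rw [erfi_sqrt_mul hv0]
    have hrpow : v ^ (-(1:ℝ)/2) = (Real.sqrt v)⁻¹ := by
      rw [show (-(1:ℝ)/2) = -(1/2 : ℝ) by ring, Real.rpow_neg hv0.le, Real.sqrt_eq_rpow]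
    rw [hrpow]
    have hexp : Real.exp (-v * ‖h‖ ^ 2) * Real.exp (-v / a ^ 2) = Real.exp (-(β * v)) := by
      rw [← Real.exp_add]
      congr 1
      simp only [hβdef]
      field_simp
      ring
    have hπ2 : Real.sqrt Real.pi * Real.sqrt Real.pi = Real.pi :=
      Real.mul_self_sqrt hπ.le
    rw [← hexp]
    field_simp
    rw [Real.sq_sqrt hπ.le]
    ring
  rw [step, integral_const_mul, core hcβ]
  -- final algebra
  set X : ℝ := a ^ 2 * ‖h‖ ^ 2 + 1 with hXdef
  have hX : (0:ℝ) < X := by positivity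
  have hsX : (0:ℝ) < Real.sqrt X := Real.sqrt_pos.mpr hX
  have hβX : β = X / a ^ 2 := by
    simp only [hβdef, hXdef]
    field_simp
  have hsβ : Real.sqrt β = Real.sqrt X / a := by
    rw [hβX, Real.sqrt_div hX.le, Real.sqrt_sq ha.le]
  rw [hsβ]
  have harg : c / (Real.sqrt X / a) = a * c / Real.sqrt X := by
    field_simp
  rw [harg]
  field_simp
end

section
/- The spectral density of the Gneiting squared-exponential space-time covariance C(h,u) = (a_t²u²+1)^{-d/2} exp(-a_s²‖h‖²/(a_t²u²+1)) on ℝ^d × ℝ is f*(‖x‖,|η|) = a_s (2√π a_s)^{-d} (√π a_t ‖x‖)^{-1} exp(-‖x‖²/(4a_s²) - a_s²η²/(a_t²‖x‖²)); that is, (2π)^{-(d+1)} ∫_ℝ ∫_{ℝ^d} exp(-i⟨h,x⟩ - iηu) C(h,u) dh du equals this expression for all x ≠ 0 and η ∈ ℝ. -/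
open MeasureTheory

open Real Complex GaussianFourier in
private lemma stmt11_inner (d : ℕ) (a_s a_t : ℝ) (has : 0 < a_s) (hat : 0 < a_t)
    (x : EuclideanSpace ℝ (Fin d)) (η u : ℝ) :
    (∫ h : EuclideanSpace ℝ (Fin d),
        Complex.exp (-Complex.I * (((inner ℝ h x : ℝ) : ℝ) : ℂ) - Complex.I * (η : ℂ) * (u : ℂ)) *
          ((((a_t ^ 2 * u ^ 2 + 1) ^ ((d : ℝ) / 2))⁻¹ *
            Real.exp (-a_s ^ 2 * ‖h‖ ^ 2 / (a_t ^ 2 * u ^ 2 + 1)) : ℝ) : ℂ)) =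
    (((Real.pi / a_s ^ 2) ^ ((d : ℝ) / 2) * Real.exp (-‖x‖ ^ 2 / (4 * a_s ^ 2)) : ℝ) : ℂ) *
      (Complex.exp (-Complex.I * (η : ℂ) * (u : ℂ)) *
        Complex.exp (-((a_t ^ 2 * ‖x‖ ^ 2 / (4 * a_s ^ 2) : ℝ) : ℂ) * (u : ℂ) ^ 2)) := by
  set A : ℝ := a_t ^ 2 * u ^ 2 + 1 with hA
  have hA0 : 0 < A := by positivity
  have hb : (0 : ℝ) < ((((a_s ^ 2 / A : ℝ) : ℂ)).re) := by
    simp only [Complex.ofReal_re]; positivity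
  have key := integral_cexp_neg_mul_sq_norm_add_of_euclideanSpace (b := ((a_s ^ 2 / A : ℝ) : ℂ))
    hb (-Complex.I) x
  have hint : (fun h : EuclideanSpace ℝ (Fin d) =>
      Complex.exp (-Complex.I * (((inner ℝ h x : ℝ) : ℝ) : ℂ) - Complex.I * (η : ℂ) * (u : ℂ)) *
        ((((A) ^ ((d : ℝ) / 2))⁻¹ * Real.exp (-a_s ^ 2 * ‖h‖ ^ 2 / A) : ℝ) : ℂ))
      = fun h => (Complex.exp (-Complex.I * (η : ℂ) * (u : ℂ)) * (((A ^ ((d : ℝ) / 2))⁻¹ : ℝ) : ℂ)) *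
        Complex.exp (-((a_s ^ 2 / A : ℝ) : ℂ) * (‖h‖ : ℂ) ^ 2 +
          (-Complex.I) * (((inner ℝ x h : ℝ) : ℝ) : ℂ)) := by
    funext h
    rw [real_inner_comm x h]
    push_cast
    rw [show (-(a_s:ℂ) ^ 2 * (‖h‖:ℂ) ^ 2 / (A:ℂ)) = (-((a_s:ℂ)^2/(A:ℂ)) * (‖h‖:ℂ)^2) by ring]
    simp only [sub_eq_add_neg, Complex.exp_add, neg_mul]
    ring
  rw [hint, integral_const_mul, key]
  have hAC : ((A:ℝ):ℂ) = (a_t:ℂ)^2*(u:ℂ)^2+1 := by rw [hA]; push_cast; ring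
  have hAne : ((A:ℝ):ℂ) ≠ 0 := by exact_mod_cast hA0.ne'
  have hasne : ((a_s:ℝ):ℂ) ≠ 0 := by exact_mod_cast has.ne'
  have hexp : (-Complex.I)^2 * (‖x‖:ℂ)^2/(4 * ((a_s^2/A :ℝ):ℂ)) =
      ((-‖x‖^2/(4*a_s^2) :ℝ):ℂ) + (-(((a_t^2*‖x‖^2/(4*a_s^2)) :ℝ):ℂ)) * (u:ℂ)^2 := by
    push_cast
    rw [hAC]
    rw [show ((-Complex.I)^2 : ℂ) = -1 by rw [neg_sq, Complex.I_sq]]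
    field_simp
    ring
  have hpow : ((((A ^ ((d:ℝ)/2))⁻¹ : ℝ)):ℂ) *
      ((↑π / ((a_s^2/A :ℝ):ℂ)) ^ ((↑(Fintype.card (Fin d)):ℂ)/2)) =
      ((((π/a_s^2) ^ ((d:ℝ)/2)) : ℝ) : ℂ) := by
    rw [Fintype.card_fin]
    rw [show ((π:ℂ) / ((a_s^2/A :ℝ):ℂ)) = (((π/(a_s^2/A) : ℝ)):ℂ) by push_cast; ring]
    rw [show ((d:ℂ)/2) = (((((d:ℝ)/2) : ℝ)):ℂ) by push_cast; ring]
    rw [← Complex.ofReal_cpow (by positivity)]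
    rw [← Complex.ofReal_mul]
    congr 1
    rw [show π/(a_s^2/A) = (π/a_s^2)*A by field_simp]
    rw [Real.mul_rpow (by positivity) hA0.le]
    rw [mul_comm ((π/a_s^2) ^ ((d:ℝ)/2)) _, ← mul_assoc,
      inv_mul_cancel₀ (ne_of_gt (Real.rpow_pos_of_pos hA0 _)), one_mul]
  rw [hexp, Complex.exp_add]
  rw [Complex.ofReal_mul, Complex.ofReal_exp]
  linear_combination (cexp (-Complex.I * (η:ℂ) * (u:ℂ)) * cexp ((-‖x‖^2/(4*a_s^2) : ℝ) : ℂ) *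
    cexp (-(((a_t^2*‖x‖^2/(4*a_s^2)) : ℝ):ℂ) * (u:ℂ)^2)) * hpow

open Real Complex in
/-- the spectral density of the Gneiting squared-exponential
space-time covariance `C(h,u) = (a_t²u²+1)^{−d/2} exp(−a_s²‖h‖²/(a_t²u²+1))`:
the (d+1)-fold inverse Fourier transform equals
`a_s (2√π a_s)^{−d} (√π a_t ‖x‖)^{−1} exp(−‖x‖²/(4a_s²) − a_s²η²/(a_t²‖x‖²))`. -/
theorem stmt11 (d : ℕ) (a_s a_t : ℝ) (has : 0 < a_s) (hat : 0 < a_t)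
    (x : EuclideanSpace ℝ (Fin d)) (hx : x ≠ 0) (η : ℝ) :
    ((((2 * Real.pi) ^ (d + 1))⁻¹ : ℝ) : ℂ) *
      ∫ u : ℝ, ∫ h : EuclideanSpace ℝ (Fin d),
        Complex.exp (-Complex.I * (((inner ℝ h x : ℝ) : ℝ) : ℂ) - Complex.I * (η : ℂ) * (u : ℂ)) *
          ((((a_t ^ 2 * u ^ 2 + 1) ^ ((d : ℝ) / 2))⁻¹ *
            Real.exp (-a_s ^ 2 * ‖h‖ ^ 2 / (a_t ^ 2 * u ^ 2 + 1)) : ℝ) : ℂ) =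
    (((a_s / ((2 * Real.sqrt Real.pi * a_s) ^ d * Real.sqrt Real.pi * a_t * ‖x‖)) *
      Real.exp (-‖x‖ ^ 2 / (4 * a_s ^ 2) - a_s ^ 2 * η ^ 2 / (a_t ^ 2 * ‖x‖ ^ 2)) : ℝ) : ℂ) := by
  have hx0 : (0:ℝ) < ‖x‖ := norm_pos_iff.mpr hx
  set c₀ : ℝ := a_t ^ 2 * ‖x‖ ^ 2 / (4 * a_s ^ 2) with hc₀
  have hc0 : 0 < c₀ := by
    rw [hc₀]
    exact div_pos (mul_pos (pow_pos hat 2) (pow_pos hx0 2)) (by positivity)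
  -- rewrite inner integral
  have h1 : (fun u : ℝ => ∫ h : EuclideanSpace ℝ (Fin d),
        Complex.exp (-Complex.I * (((inner ℝ h x : ℝ) : ℝ) : ℂ) - Complex.I * (η : ℂ) * (u : ℂ)) *
          ((((a_t ^ 2 * u ^ 2 + 1) ^ ((d : ℝ) / 2))⁻¹ *
            Real.exp (-a_s ^ 2 * ‖h‖ ^ 2 / (a_t ^ 2 * u ^ 2 + 1)) : ℝ) : ℂ))
      = fun u : ℝ => (((Real.pi / a_s ^ 2) ^ ((d : ℝ) / 2) *
          Real.exp (-‖x‖ ^ 2 / (4 * a_s ^ 2)) : ℝ) : ℂ) *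
        (Complex.exp (Complex.I * ((-η : ℝ) : ℂ) * (u : ℂ)) *
          Complex.exp (-((c₀ : ℝ) : ℂ) * (u : ℂ) ^ 2)) := by
    funext u
    rw [stmt11_inner d a_s a_t has hat x η u]
    congr 2
    push_cast
    ring
  rw [h1, integral_const_mul]
  have hb : (0:ℝ) < (((c₀ : ℝ) : ℂ)).re := by simpa using hc0
  rw [fourierIntegral_gaussian hb ((-η : ℝ) : ℂ)]
  -- convert to reals
  have h2 : ((π:ℂ) / ((c₀:ℝ):ℂ)) ^ ((1:ℂ)/2) = (((π/c₀) ^ ((1:ℝ)/2) : ℝ) : ℂ) := by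
    rw [show ((π:ℂ) / ((c₀:ℝ):ℂ)) = (((π/c₀ : ℝ)):ℂ) by push_cast; ring,
      show ((1:ℂ)/2) = ((((1:ℝ)/2 : ℝ)):ℂ) by push_cast; ring,
      ← Complex.ofReal_cpow (by positivity)]
  have h3 : Complex.exp (-((-η:ℝ):ℂ) ^ 2 / (4 * ((c₀:ℝ):ℂ))) =
      (((Real.exp (-η^2/(4*c₀))) : ℝ) : ℂ) := by
    rw [Complex.ofReal_exp]
    congr 1
    push_cast
    ring
  rw [h2, h3]
  rw [← Complex.ofReal_mul, ← Complex.ofReal_mul, ← Complex.ofReal_mul]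
  congr 1
  -- now a purely real identity
  have hs2 : Real.sqrt π ^ 2 = π := Real.sq_sqrt pi_nonneg
  have hrp1 : (π/a_s^2) ^ ((d:ℝ)/2) = (Real.sqrt π / a_s) ^ d := by
    rw [show ((d:ℝ)/2) = ((1:ℝ)/2) * d by ring, Real.rpow_mul (by positivity), Real.rpow_natCast]
    congr 1
    rw [← Real.sqrt_eq_rpow, Real.sqrt_div pi_nonneg, Real.sqrt_sq has.le]
  have he : (2 * Real.sqrt π * a_s / (a_t * ‖x‖))^2 = π/c₀ := by
    rw [div_pow, hc₀,
      show (2 * Real.sqrt π * a_s)^2 = 4 * π * a_s^2 by linear_combination (4*a_s^2) * hs2,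
      show (a_t*‖x‖)^2 = a_t^2*‖x‖^2 by ring]
    rw [eq_div_iff (by positivity : (a_t ^ 2 * ‖x‖ ^ 2 / (4 * a_s ^ 2)) ≠ 0)]
    field_simp
  have hrp2 : (π/c₀) ^ ((1:ℝ)/2) = 2 * Real.sqrt π * a_s / (a_t * ‖x‖) := by
    rw [← Real.sqrt_eq_rpow, ← he]
    exact Real.sqrt_sq (by positivity)
  rw [hrp1, hrp2]
  rw [show -‖x‖ ^ 2 / (4 * a_s ^ 2) - a_s ^ 2 * η ^ 2 / (a_t ^ 2 * ‖x‖ ^ 2)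
      = (-‖x‖ ^ 2 / (4 * a_s ^ 2)) + (-η^2/(4*c₀)) by rw [hc₀]; field_simp; ring,
    Real.exp_add]
  set s : ℝ := Real.sqrt π with hsdef
  have hπ : π = s ^ 2 := by rw [hsdef]; exact hs2.symm
  have hs0 : 0 < s := by rw [hsdef]; positivity
  rw [hπ]
  field_simp
  have hai : a_s ^ d * a_s⁻¹ ^ d = 1 := by rw [← mul_pow, mul_inv_cancel₀ has.ne', one_pow]
  linear_combination (s ^ 2 * s ^ (d * 2) * 2 ^ d * 2) * hai
end
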